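/- arXiv:1904.04061 — 2 statements merged into one kernel-verified Lean document; each statement's English description precedes it below -/
import Mathlib

section
/- (Theorem 3) Let σ > 0, and for i = 1, …, N let δ_i ∈ ℝ^d be nonzero vectors, y_i ∈ {−1, 1}, and c_i = σ ‖δ_i‖_∞ > 0. Define gˢ : ℝ^{d×r} → ℝ by gˢ(U) = Σ_{i=1}^{N} G_{c_i}(−y_i (1 − δ_iᵀ U Uᵀ δ_i)). Then gˢ is differentiable at every U, and its Fréchet derivative at U is the linear map H ↦ Σ_{i=1}^{N} 2 y_i ν_i(U) δ_iᵀ H Uᵀ δ_i; equivalently, its gradient with respect to the Frobenius inner product is Σ_{i=1}^{N} 2 y_i ν_i(U) (δ_i δ_iᵀ) U, where ν_i(U) = clamp(−y_i (1 − δ_iᵀ U Uᵀ δ_i)/c_i, 0, 1). -/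
open Matrix

attribute [local instance] Matrix.normedAddCommGroup Matrix.normedSpace

/-- The smoothed hinge envelope `G_c`. -/
noncomputable def smoothedHinge (c a : ℝ) : ℝ :=
  if a ≤ 0 then 0 else if a ≤ c then a ^ 2 / (2 * c) else a - c / 2


section Aux
variable {d r : ℕ}


lemma sqmax_hasDerivAt (a : ℝ) : HasDerivAt (fun x : ℝ => max x 0 ^ 2) (2 * max a 0) a := by
  rcases lt_trichotomy a 0 with h | h | h
  · have hm : max a 0 = 0 := max_eq_right h.le
    rw [hm, mul_zero]
    have : (fun x : ℝ => max x 0 ^ 2) =ᶠ[nhds a] fun _ => (0:ℝ) := by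
      filter_upwards [Iio_mem_nhds h] with x hx
      simp [max_eq_right (le_of_lt (Set.mem_Iio.mp hx))]
    exact (hasDerivAt_const a (0:ℝ)).congr_of_eventuallyEq this
  · subst h
    simp only [max_self, mul_zero]
    rw [hasDerivAt_iff_isLittleO_nhds_zero]
    rw [Asymptotics.isLittleO_iff]
    intro ε hε
    filter_upwards [Metric.ball_mem_nhds (0:ℝ) hε] with h hh
    simp only [Metric.mem_ball, dist_zero_right] at hh
    have h1 : |max h 0 ^ 2| ≤ |h| * |h| := by
      rw [abs_of_nonneg (by positivity : (0:ℝ) ≤ max h 0 ^ 2)]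
      rcases le_total h 0 with hh0 | hh0
      · rw [max_eq_right hh0]; simpa using mul_nonneg (abs_nonneg h) (abs_nonneg h)
      · rw [max_eq_left hh0, sq, abs_of_nonneg hh0]
    calc ‖((0 + h) ⊔ 0) ^ 2 - ((0:ℝ) ⊔ 0) ^ 2 - h • 0‖ = |max h 0 ^ 2| := by
          norm_num
      _ ≤ |h| * |h| := h1
      _ ≤ ε * ‖h‖ := mul_le_mul_of_nonneg_right hh.le (abs_nonneg _)
  · have hm : max a 0 = a := max_eq_left h.le
    rw [hm]
    have he : (fun x : ℝ => max x 0 ^ 2) =ᶠ[nhds a] fun x => x ^ 2 := by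
      filter_upwards [Ioi_mem_nhds h] with x hx
      simp [max_eq_left (le_of_lt (Set.mem_Ioi.mp hx))]
    have := hasDerivAt_pow 2 a
    norm_num at this
    exact this.congr_of_eventuallyEq he

lemma smoothedHinge_eq {c : ℝ} (hc : 0 < c) (a : ℝ) :
    smoothedHinge c a = (max a 0 ^ 2 - max (a - c) 0 ^ 2) / (2 * c) := by
  unfold smoothedHinge
  rcases le_or_gt a 0 with h | h
  · rw [if_pos h, max_eq_right h, max_eq_right (by linarith)]; simp
  · rw [if_neg (not_le.mpr h), max_eq_left h.le]
    rcases le_or_gt a c with h2 | h2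
    · rw [if_pos h2, max_eq_right (by linarith)]; ring
    · rw [if_neg (not_le.mpr h2), max_eq_left (by linarith)]
      field_simp
      ring

lemma smoothedHinge_hasDerivAt {c : ℝ} (hc : 0 < c) (a : ℝ) :
    HasDerivAt (smoothedHinge c) (min (max (a / c) 0) 1) a := by
  have h2 : HasDerivAt (fun x : ℝ => max (x - c) 0 ^ 2) (2 * max (a - c) 0) a := by
    have := (sqmax_hasDerivAt (a - c)).comp a ((hasDerivAt_id a).sub_const c)
    simpa [Function.comp_def] using this
  have h3 := ((sqmax_hasDerivAt a).sub h2).div_const (2 * c)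
  have hfun : (fun x : ℝ => (max x 0 ^ 2 - max (x - c) 0 ^ 2) / (2 * c)) = smoothedHinge c := by
    ext x; rw [smoothedHinge_eq hc]
  simp only [Pi.sub_apply] at h3
  rw [hfun] at h3
  refine h3.congr_deriv (Eq.symm ?_)
  rcases le_or_gt a 0 with h | h
  · have e1 : a ⊔ 0 = 0 := max_eq_right h
    have e2 : (a - c) ⊔ 0 = 0 := max_eq_right (by linarith)
    have e3 : a / c ⊔ 0 = 0 := max_eq_right (div_nonpos_of_nonpos_of_nonneg h hc.le)
    rw [e1, e2, e3]; simp
  · rcases le_or_gt a c with hac | hac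
    · have e1 : a ⊔ 0 = a := max_eq_left h.le
      have e2 : (a - c) ⊔ 0 = 0 := max_eq_right (by linarith)
      have e3 : a / c ⊔ 0 = a / c := max_eq_left (by positivity)
      have e4 : (a / c) ⊓ 1 = a / c := min_eq_left (by rw [div_le_one hc]; exact hac)
      rw [e1, e2, e3, e4]; field_simp; ring
    · have e1 : a ⊔ 0 = a := max_eq_left h.le
      have e2 : (a - c) ⊔ 0 = a - c := max_eq_left (by linarith)
      have e3 : a / c ⊔ 0 = a / c := max_eq_left (by positivity)
      have e4 : (a / c) ⊓ 1 = 1 := min_eq_right (by rw [le_div_iff₀ hc]; linarith)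
      rw [e1, e2, e3, e4]; field_simp; ring

lemma dot_eq (δ : Fin d → ℝ) (A B : Matrix (Fin d) (Fin r) ℝ) :
    δ ⬝ᵥ ((A * Bᵀ) *ᵥ δ) = ∑ l, (δ ᵥ* A) l * (δ ᵥ* B) l := by
  rw [dotProduct_mulVec, ← Matrix.vecMul_vecMul, ← dotProduct_mulVec,
    Matrix.mulVec_transpose, dotProduct]

noncomputable def quadDeriv (δ : Fin d → ℝ) (U : Matrix (Fin d) (Fin r) ℝ) :
    Matrix (Fin d) (Fin r) ℝ →L[ℝ] ℝ :=
  LinearMap.toContinuousLinearMap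
    { toFun := fun H => 2 * (δ ⬝ᵥ ((H * Uᵀ) *ᵥ δ))
      map_add' := by
        intro A B
        simp [Matrix.add_mul, Matrix.add_mulVec, dotProduct_add]
        ring
      map_smul' := by
        intro m A
        simp [Matrix.smul_mul, Matrix.smul_mulVec, dotProduct_smul]
        ring }

lemma quad_hasFDerivAt (δ : Fin d → ℝ) (U : Matrix (Fin d) (Fin r) ℝ) :
    HasFDerivAt (fun V : Matrix (Fin d) (Fin r) ℝ => δ ⬝ᵥ ((V * Vᵀ) *ᵥ δ))
      (quadDeriv δ U) U := by
  set φ : Fin r → (Matrix (Fin d) (Fin r) ℝ →L[ℝ] ℝ) := fun l =>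
    LinearMap.toContinuousLinearMap
      { toFun := fun V => (δ ᵥ* V) l
        map_add' := by intro A B; simp [Matrix.vecMul_add]
        map_smul' := by
          intro m A
          simp only [Matrix.vecMul, dotProduct, Matrix.smul_apply, smul_eq_mul,
            RingHom.id_apply, Finset.mul_sum]
          apply Finset.sum_congr rfl
          intros; ring } with hφ
  have hφ' : ∀ l U, HasFDerivAt (fun V : Matrix (Fin d) (Fin r) ℝ => (δ ᵥ* V) l) (φ l) U := by
    intro l U
    exact (φ l).hasFDerivAt
  have h : HasFDerivAt (fun V : Matrix (Fin d) (Fin r) ℝ => ∑ l, (δ ᵥ* V) l * (δ ᵥ* V) l)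
      (∑ l, ((δ ᵥ* U) l • φ l + (δ ᵥ* U) l • φ l)) U :=
    HasFDerivAt.fun_sum fun l _ => (hφ' l U).mul (hφ' l U)
  convert h using 1
  · funext V; exact dot_eq δ V V
  · ext H
    simp only [quadDeriv, LinearMap.coe_toContinuousLinearMap', LinearMap.coe_mk, AddHom.coe_mk,
      ContinuousLinearMap.coe_sum', Finset.sum_apply, ContinuousLinearMap.add_apply,
      ContinuousLinearMap.coe_smul', Pi.smul_apply, smul_eq_mul, hφ]
    rw [dot_eq δ H U, Finset.mul_sum]
    apply Finset.sum_congr rfl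
    intro l _
    ring

lemma trace_eq (δ : Fin d → ℝ) (U H : Matrix (Fin d) (Fin r) ℝ) :
    Matrix.trace ((Matrix.vecMulVec δ δ * U)ᵀ * H) = δ ⬝ᵥ ((H * Uᵀ) *ᵥ δ) := by
  simp only [Matrix.trace, Matrix.diag_apply, Matrix.mul_apply, Matrix.transpose_apply,
    Matrix.vecMulVec_apply, dotProduct, Matrix.mulVec, Finset.sum_mul, Finset.mul_sum]
  rw [Finset.sum_comm]
  apply Finset.sum_congr rfl
  intro j _
  rw [Finset.sum_comm]
  apply Finset.sum_congr rfl
  intro l _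
  apply Finset.sum_congr rfl
  intro k _
  ring

end Aux

/-- Theorem 3: the Nesterov-smoothed empirical hinge loss
`gˢ(U) = Σᵢ G_{cᵢ}(-yᵢ(1 - δᵢᵀUUᵀδᵢ))`, with `cᵢ = σ‖δᵢ‖_∞ > 0`, is differentiable at every
`U`, with Fréchet derivative `H ↦ Σᵢ 2 yᵢ νᵢ(U) δᵢᵀ H Uᵀ δᵢ`; equivalently its gradient with
respect to the Frobenius inner product is `Σᵢ 2 yᵢ νᵢ(U) (δᵢδᵢᵀ) U`, where
`νᵢ(U) = clamp(-yᵢ(1 - δᵢᵀUUᵀδᵢ)/cᵢ, 0, 1)`. (The norm on `Fin d → ℝ` is the sup norm.) -/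
theorem smoothed_hinge_loss_fderiv (d r N : ℕ) (σ : ℝ) (hσ : 0 < σ)
    (δ : Fin N → Fin d → ℝ) (hδ : ∀ i, δ i ≠ 0)
    (y : Fin N → ℝ) (hy : ∀ i, y i = 1 ∨ y i = -1)
    (c : Fin N → ℝ) (hc : ∀ i, c i = σ * ‖δ i‖) :
    (∀ i, 0 < c i) ∧
    ∀ U : Matrix (Fin d) (Fin r) ℝ,
      let ν : Fin N → ℝ := fun i =>
        min (max (-(y i) * (1 - δ i ⬝ᵥ ((U * Uᵀ) *ᵥ δ i)) / c i) 0) 1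
      DifferentiableAt ℝ
        (fun V : Matrix (Fin d) (Fin r) ℝ =>
          ∑ i, smoothedHinge (c i) (-(y i) * (1 - δ i ⬝ᵥ ((V * Vᵀ) *ᵥ δ i)))) U ∧
      ∀ H : Matrix (Fin d) (Fin r) ℝ,
        fderiv ℝ
            (fun V : Matrix (Fin d) (Fin r) ℝ =>
              ∑ i, smoothedHinge (c i) (-(y i) * (1 - δ i ⬝ᵥ ((V * Vᵀ) *ᵥ δ i)))) U H
          = ∑ i, 2 * y i * ν i * (δ i ⬝ᵥ ((H * Uᵀ) *ᵥ δ i)) ∧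
        fderiv ℝ
            (fun V : Matrix (Fin d) (Fin r) ℝ =>
              ∑ i, smoothedHinge (c i) (-(y i) * (1 - δ i ⬝ᵥ ((V * Vᵀ) *ᵥ δ i)))) U H
          = Matrix.trace
              ((∑ i, (2 * y i * ν i) • (Matrix.vecMulVec (δ i) (δ i) * U))ᵀ * H) := by
  have hcpos : ∀ i, 0 < c i := fun i => by
    rw [hc i]
    exact mul_pos hσ (norm_pos_iff.mpr (hδ i))
  refine ⟨hcpos, fun U => ?_⟩
  intro ν
  set g : Matrix (Fin d) (Fin r) ℝ → ℝ := fun V =>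
    ∑ i, smoothedHinge (c i) (-(y i) * (1 - δ i ⬝ᵥ ((V * Vᵀ) *ᵥ δ i))) with hg
  have hterm : ∀ i : Fin N, HasFDerivAt
      (fun V : Matrix (Fin d) (Fin r) ℝ =>
        smoothedHinge (c i) (-(y i) * (1 - δ i ⬝ᵥ ((V * Vᵀ) *ᵥ δ i))))
      (ν i • (y i • quadDeriv (δ i) U)) U := by
    intro i
    have hq := quad_hasFDerivAt (δ i) U
    have hf : HasFDerivAt
        (fun V : Matrix (Fin d) (Fin r) ℝ => -(y i) * (1 - δ i ⬝ᵥ ((V * Vᵀ) *ᵥ δ i)))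
        (y i • quadDeriv (δ i) U) U := by
      have h1 := (hq.const_mul (y i)).sub_const (y i)
      have hfun : (fun V : Matrix (Fin d) (Fin r) ℝ =>
          y i * (δ i ⬝ᵥ ((V * Vᵀ) *ᵥ δ i)) - y i)
          = fun V => -(y i) * (1 - δ i ⬝ᵥ ((V * Vᵀ) *ᵥ δ i)) := by
        funext V; ring
      rw [hfun] at h1
      exact h1
    have hs := (smoothedHinge_hasDerivAt (hcpos i)
      (-(y i) * (1 - δ i ⬝ᵥ ((U * Uᵀ) *ᵥ δ i)))).comp_hasFDerivAt U hf
    exact hs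
  have hsum : HasFDerivAt g (∑ i, ν i • (y i • quadDeriv (δ i) U)) U :=
    HasFDerivAt.fun_sum fun i _ => hterm i
  refine ⟨hsum.differentiableAt, fun H => ?_⟩
  have hfd := hsum.fderiv
  rw [hg] at hfd
  rw [hfd]
  have hval : (∑ i, ν i • (y i • quadDeriv (δ i) U)) H
      = ∑ i, 2 * y i * ν i * (δ i ⬝ᵥ ((H * Uᵀ) *ᵥ δ i)) := by
    rw [ContinuousLinearMap.sum_apply]
    apply Finset.sum_congr rfl
    intro i _
    have : quadDeriv (δ i) U H = 2 * (δ i ⬝ᵥ ((H * Uᵀ) *ᵥ δ i)) := rfl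
    simp only [ContinuousLinearMap.coe_smul', Pi.smul_apply, smul_eq_mul, this]
    ring
  refine ⟨hval, ?_⟩
  rw [hval]
  rw [Matrix.transpose_sum]
  rw [Matrix.sum_mul, Matrix.trace_sum]
  apply Finset.sum_congr rfl
  intro i _
  rw [Matrix.transpose_smul, Matrix.smul_mul, Matrix.trace_smul, trace_eq, smul_eq_mul]
end

section
/- (Rademacher contraction, finite one-sided form) Let N ≥ 1, let T be a nonempty set, let a₁, …, a_N : T → ℝ be functions such that the set {(a₁(t), …, a_N(t)) : t ∈ T} ⊆ ℝ^N is bounded, and let ψ₁, …, ψ_N : ℝ → ℝ each be Z-Lipschitz for some Z ≥ 0 with ψ_i(0) = 0. Then 2^{−N} Σ_{s ∈ {−1,1}^N} sup_{t ∈ T} Σ_{i=1}^{N} s_i ψ_i(a_i(t)) ≤ Z · 2^{−N} Σ_{s ∈ {−1,1}^N} sup_{t ∈ T} Σ_{i=1}^{N} s_i a_i(t), where the outer sums average over all sign vectors s ∈ {−1, 1}^N. -/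
open Finset

private lemma bddAbove_of_abs_le {T : Type*} {f : T → ℝ} {M : ℝ} (h : ∀ t, |f t| ≤ M) :
    BddAbove (Set.range f) := ⟨M, by rintro _ ⟨t, rfl⟩; exact (abs_le.1 (h t)).2⟩

private lemma step_core {T : Type*} [Nonempty T] (g A : T → ℝ) (φ : ℝ → ℝ) (Z M : ℝ)
    (hlip : ∀ x y, |φ x - φ y| ≤ Z * |x - y|)
    (hg : ∀ t, |g t| ≤ M) (hφ : ∀ t, |φ (A t)| ≤ M) (hA : ∀ t, |Z * A t| ≤ M) :
    (⨆ t, g t + φ (A t)) + (⨆ t, g t - φ (A t)) ≤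
      (⨆ t, g t + Z * A t) + (⨆ t, g t - Z * A t) := by
  have b3 : BddAbove (Set.range fun t => g t + Z * A t) :=
    bddAbove_of_abs_le (fun t => (abs_add_le _ _).trans (add_le_add (hg t) (hA t)))
  have b4 : BddAbove (Set.range fun t => g t - Z * A t) :=
    bddAbove_of_abs_le (fun t => (abs_sub _ _).trans (add_le_add (hg t) (hA t)))
  set X := (⨆ t, g t + Z * A t) + (⨆ t, g t - Z * A t) with hX
  have key : ∀ t u : T, (g t + φ (A t)) + (g u - φ (A u)) ≤ X := by
    intro t u
    have hd : φ (A t) - φ (A u) ≤ Z * |A t - A u| :=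
      (le_abs_self _).trans (hlip (A t) (A u))
    rcases le_total (A u) (A t) with hc | hc
    · have h1 : g t + Z * A t ≤ ⨆ t, g t + Z * A t := le_ciSup b3 t
      have h2 : g u - Z * A u ≤ ⨆ t, g t - Z * A t := le_ciSup b4 u
      rw [abs_of_nonneg (by linarith : (0:ℝ) ≤ A t - A u), mul_sub] at hd
      rw [hX]; linarith
    · have h1 : g u + Z * A u ≤ ⨆ t, g t + Z * A t := le_ciSup b3 u
      have h2 : g t - Z * A t ≤ ⨆ t, g t - Z * A t := le_ciSup b4 t
      rw [abs_of_nonpos (by linarith : A t - A u ≤ (0:ℝ)), mul_neg, mul_sub] at hd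
      rw [hX]; linarith
  have h1 : ∀ t, (⨆ u, g u - φ (A u)) ≤ X - (g t + φ (A t)) := fun t =>
    ciSup_le fun u => by linarith [key t u]
  have h2 : (⨆ t, g t + φ (A t)) ≤ X - ⨆ u, g u - φ (A u) :=
    ciSup_le fun t => by linarith [h1 t]
  linarith

private lemma step_eps {T : Type*} [Nonempty T] (g A : T → ℝ) (φ : ℝ → ℝ) (Z M ε : ℝ)
    (hε : ε = 1 ∨ ε = -1)
    (hlip : ∀ x y, |φ x - φ y| ≤ Z * |x - y|)
    (hg : ∀ t, |g t| ≤ M) (hφ : ∀ t, |φ (A t)| ≤ M) (hA : ∀ t, |Z * A t| ≤ M) :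
    (⨆ t, g t + ε * φ (A t)) + (⨆ t, g t - ε * φ (A t)) ≤
      (⨆ t, g t + ε * (Z * A t)) + (⨆ t, g t - ε * (Z * A t)) := by
  rcases hε with rfl | rfl
  · simp only [one_mul]
    exact step_core g A φ Z M hlip hg hφ hA
  · have core := step_core g A (fun x => -(φ x)) Z M
      (fun x y => by rw [neg_sub_neg, abs_sub_comm]; exact hlip x y)
      hg (fun t => by simpa using hφ t) hA
    have e1 : (⨆ t, g t + (-1) * φ (A t)) = ⨆ t, g t + (fun x => -(φ x)) (A t) := by
      congr 1; funext t; ring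
    have e2 : (⨆ t, g t - (-1) * φ (A t)) = ⨆ t, g t - (fun x => -(φ x)) (A t) := by
      congr 1; funext t; ring
    have e3 : (⨆ t, g t + (-1) * (Z * A t)) = ⨆ t, g t - Z * A t := by
      congr 1; funext t; ring
    have e4 : (⨆ t, g t - (-1) * (Z * A t)) = ⨆ t, g t + Z * A t := by
      congr 1; funext t; ring
    rw [e1, e2, e3, e4]
    linarith [core]

/-- Rademacher contraction (finite one-sided form): averaging over all sign vectors
`s ∈ {-1,1}^N` (encoded by `s : Fin N → Bool`), the empirical Rademacher average of the
contracted class `{(ψᵢ(aᵢ(t)))ᵢ : t ∈ T}` is at most `Z` times that of the original class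
`{(aᵢ(t))ᵢ : t ∈ T}`, for `Z`-Lipschitz functions `ψᵢ` with `ψᵢ(0) = 0`. -/
theorem rademacher_contraction_finite (N : ℕ) (hN : 1 ≤ N) {T : Type*} [Nonempty T]
    (a : Fin N → T → ℝ) (hbdd : ∃ C : ℝ, ∀ i : Fin N, ∀ t : T, |a i t| ≤ C)
    (ψ : Fin N → ℝ → ℝ) (Z : ℝ) (hZ : 0 ≤ Z)
    (hlip : ∀ i, LipschitzWith Z.toNNReal (ψ i)) (hψ0 : ∀ i, ψ i 0 = 0) :
    ((2 : ℝ) ^ N)⁻¹ *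
        ∑ s : Fin N → Bool, ⨆ t : T, ∑ i, (if s i then (1 : ℝ) else -1) * ψ i (a i t)
      ≤ Z * (((2 : ℝ) ^ N)⁻¹ *
        ∑ s : Fin N → Bool, ⨆ t : T, ∑ i, (if s i then (1 : ℝ) else -1) * a i t) := by
  classical
  obtain ⟨C, hC⟩ := hbdd
  obtain ⟨t0⟩ := ‹Nonempty T›
  have hC0 : 0 ≤ C := le_trans (abs_nonneg _) (hC ⟨0, hN⟩ t0)
  have hN1 : (1 : ℝ) ≤ (N : ℝ) := by exact_mod_cast hN
  have lipR : ∀ i x y, |ψ i x - ψ i y| ≤ Z * |x - y| := by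
    intro i x y
    have := (hlip i).dist_le_mul x y
    rwa [Real.dist_eq, Real.dist_eq, Real.coe_toNNReal Z hZ] at this
  set B := (Z + 1) * C with hB
  have hB0 : 0 ≤ B := by nlinarith
  set ε : (Fin N → Bool) → Fin N → ℝ := fun s i => if s i then 1 else -1 with hε
  set h : ℕ → Fin N → T → ℝ :=
    fun k i t => if (i : ℕ) < k then Z * a i t else ψ i (a i t) with hh
  have hψa : ∀ i t, |ψ i (a i t)| ≤ B := by
    intro i t
    have h1 := lipR i (a i t) 0
    rw [hψ0 i, sub_zero, sub_zero] at h1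
    have := hC i t
    have := abs_nonneg (a i t)
    nlinarith
  have hZa : ∀ i t, |Z * a i t| ≤ B := by
    intro i t
    rw [abs_mul, abs_of_nonneg hZ]
    have := hC i t
    have := abs_nonneg (a i t)
    nlinarith
  have habs : ∀ k i t, |h k i t| ≤ B := by
    intro k i t
    simp only [hh]
    split
    · exact hZa i t
    · exact hψa i t
  have hεabs : ∀ s i, |ε s i| = 1 := by
    intro s i; simp only [hε]; split <;> simp
  have hεpm : ∀ s i, ε s i = 1 ∨ ε s i = -1 := by
    intro s i; simp only [hε]; split
    · exact Or.inl rfl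
    · exact Or.inr rfl
  have hsumabs : ∀ (S : Finset (Fin N)) (s : Fin N → Bool) (k : ℕ) (t : T),
      |∑ i ∈ S, ε s i * h k i t| ≤ (N : ℝ) * B := by
    intro S s k t
    calc |∑ i ∈ S, ε s i * h k i t| ≤ ∑ i ∈ S, |ε s i * h k i t| := abs_sum_le_sum_abs _ _
      _ ≤ ∑ _i ∈ S, B := by
          refine sum_le_sum fun i _ => ?_
          rw [abs_mul, hεabs s i, one_mul]; exact habs k i t
      _ = (S.card : ℝ) * B := by rw [sum_const, nsmul_eq_mul]
      _ ≤ (N : ℝ) * B := by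
          have h1 := S.card_le_univ
          simp only [card_univ, Fintype.card_fin] at h1
          have : (S.card : ℝ) ≤ (N : ℝ) := by exact_mod_cast h1
          nlinarith
  set F : ℕ → (Fin N → Bool) → ℝ := fun k s => ⨆ t, ∑ i, ε s i * h k i t with hF
  have step : ∀ j : Fin N, ∑ s, F (j : ℕ) s ≤ ∑ s, F ((j : ℕ) + 1) s := by
    intro j
    have hinv : Function.Involutive (fun s : Fin N → Bool => Function.update s j (!s j)) := by
      intro s
      funext i
      rcases eq_or_ne i j with rfl | hij
      · simp
      · simp [Function.update_of_ne hij]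
    set e := hinv.toPerm with he
    have he_apply : ∀ s, e s = Function.update s j (!s j) := fun s => rfl
    have pair : ∀ s, F (j : ℕ) s + F (j : ℕ) (e s) ≤ F ((j : ℕ) + 1) s + F ((j : ℕ) + 1) (e s) := by
      intro s
      set G : T → ℝ := fun t => ∑ i ∈ univ.erase j, ε s i * h (j : ℕ) i t with hG
      have hGabs : ∀ t, |G t| ≤ (N : ℝ) * B := fun t => hsumabs _ s _ t
      have hflip_ne : ∀ i : Fin N, i ≠ j → ε (e s) i = ε s i := by
        intro i hij
        simp only [hε, he_apply, Function.update_of_ne hij]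
      have hflip_j : ε (e s) j = -(ε s j) := by
        simp only [hε, he_apply, Function.update_self]
        cases hsj : s j <;> simp
      have hterm_ne : ∀ i : Fin N, i ≠ j → ∀ t, h ((j : ℕ) + 1) i t = h (j : ℕ) i t := by
        intro i hij t
        have hne : (i : ℕ) ≠ (j : ℕ) := fun hc => hij (Fin.ext hc)
        simp only [hh]
        by_cases hlt : (i : ℕ) < (j : ℕ)
        · simp [hlt, Nat.lt_succ_of_lt hlt]
        · have : ¬ (i : ℕ) < (j : ℕ) + 1 := by omega
          simp [hlt, this]
      have hjk : h (j : ℕ) j = fun t => ψ j (a j t) := by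
        funext t; simp [hh]
      have hjk1 : h ((j : ℕ) + 1) j = fun t => Z * a j t := by
        funext t; simp [hh]
      have eF1 : F (j : ℕ) s = ⨆ t, G t + ε s j * ψ j (a j t) := by
        simp only [hF]
        congr 1; funext t
        rw [← Finset.sum_erase_add univ _ (mem_univ j), hjk]
      have eF2 : F (j : ℕ) (e s) = ⨆ t, G t - ε s j * ψ j (a j t) := by
        simp only [hF]
        congr 1; funext t
        rw [← Finset.sum_erase_add univ _ (mem_univ j), hjk, hflip_j]
        rw [Finset.sum_congr rfl (fun i hi => by
          rw [hflip_ne i (Finset.ne_of_mem_erase hi)])]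
        ring
      have eF3 : F ((j : ℕ) + 1) s = ⨆ t, G t + ε s j * (Z * a j t) := by
        simp only [hF]
        congr 1; funext t
        rw [← Finset.sum_erase_add univ _ (mem_univ j), hjk1]
        rw [Finset.sum_congr rfl (fun i hi => by
          rw [hterm_ne i (Finset.ne_of_mem_erase hi)])]
      have eF4 : F ((j : ℕ) + 1) (e s) = ⨆ t, G t - ε s j * (Z * a j t) := by
        simp only [hF]
        congr 1; funext t
        rw [← Finset.sum_erase_add univ _ (mem_univ j), hjk1, hflip_j]
        rw [Finset.sum_congr rfl (fun i hi => by
          rw [hflip_ne i (Finset.ne_of_mem_erase hi),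
            hterm_ne i (Finset.ne_of_mem_erase hi)])]
        ring
      rw [eF1, eF2, eF3, eF4]
      exact step_eps G (a j) (ψ j) Z ((N : ℝ) * B) (ε s j) (hεpm s j) (lipR j)
        hGabs (fun t => (hψa j t).trans (by nlinarith))
        (fun t => (hZa j t).trans (by nlinarith))
    have sum_eq : ∀ (H : (Fin N → Bool) → ℝ), ∑ s, H (e s) = ∑ s, H s := fun H =>
      Equiv.sum_comp e H
    have A1 : ∑ s, (F (j : ℕ) s + F (j : ℕ) (e s)) = ∑ s, F (j : ℕ) s + ∑ s, F (j : ℕ) s := by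
      rw [Finset.sum_add_distrib, sum_eq]
    have A2 : ∑ s, (F ((j : ℕ) + 1) s + F ((j : ℕ) + 1) (e s))
        = ∑ s, F ((j : ℕ) + 1) s + ∑ s, F ((j : ℕ) + 1) s := by
      rw [Finset.sum_add_distrib, sum_eq]
    have := Finset.sum_le_sum (fun s (_ : s ∈ univ) => pair s)
    rw [A1, A2] at this
    linarith
  have chain : ∀ k, k ≤ N → ∑ s, F 0 s ≤ ∑ s, F k s := by
    intro k
    induction k with
    | zero => intro _; exact le_rfl
    | succ n ih =>
        intro hkn
        have hn : n < N := hkn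
        exact (ih hn.le).trans (step ⟨n, hn⟩)
  have e0 : ∀ s : Fin N → Bool,
      F 0 s = ⨆ t, ∑ i, (if s i then (1 : ℝ) else -1) * ψ i (a i t) := by
    intro s
    simp only [hF]
    have : ∀ t : T, ∑ i, ε s i * h 0 i t
        = ∑ i, (if s i then (1 : ℝ) else -1) * ψ i (a i t) := by
      intro t
      refine Finset.sum_congr rfl fun i _ => ?_
      simp [hh, hε]
    exact iSup_congr this
  have eN : ∀ s : Fin N → Bool,
      F N s = Z * ⨆ t, ∑ i, (if s i then (1 : ℝ) else -1) * a i t := by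
    intro s
    rw [Real.mul_iSup_of_nonneg hZ]
    simp only [hF]
    congr 1; funext t
    rw [Finset.mul_sum]
    refine Finset.sum_congr rfl fun i _ => ?_
    have hi : (i : ℕ) < N := i.isLt
    simp only [hh, hε, if_pos hi]
    ring
  have hfin : ∑ s : Fin N → Bool, ⨆ t : T, ∑ i, (if s i then (1 : ℝ) else -1) * ψ i (a i t)
      ≤ Z * ∑ s : Fin N → Bool, ⨆ t : T, ∑ i, (if s i then (1 : ℝ) else -1) * a i t := by
    calc ∑ s : Fin N → Bool, ⨆ t : T, ∑ i, (if s i then (1 : ℝ) else -1) * ψ i (a i t)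
        = ∑ s, F 0 s := (Finset.sum_congr rfl fun s _ => (e0 s).symm)
      _ ≤ ∑ s, F N s := chain N le_rfl
      _ = ∑ s : Fin N → Bool, Z * ⨆ t : T, ∑ i, (if s i then (1 : ℝ) else -1) * a i t :=
          Finset.sum_congr rfl fun s _ => eN s
      _ = Z * ∑ s : Fin N → Bool, ⨆ t : T, ∑ i, (if s i then (1 : ℝ) else -1) * a i t :=
          (Finset.mul_sum _ _ _).symm
  have hpos : (0 : ℝ) ≤ ((2 : ℝ) ^ N)⁻¹ := by positivity
  calc ((2 : ℝ) ^ N)⁻¹ *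
        ∑ s : Fin N → Bool, ⨆ t : T, ∑ i, (if s i then (1 : ℝ) else -1) * ψ i (a i t)
      ≤ ((2 : ℝ) ^ N)⁻¹ *
        (Z * ∑ s : Fin N → Bool, ⨆ t : T, ∑ i, (if s i then (1 : ℝ) else -1) * a i t) :=
        mul_le_mul_of_nonneg_left hfin hpos
    _ = Z * (((2 : ℝ) ^ N)⁻¹ *
        ∑ s : Fin N → Bool, ⨆ t : T, ∑ i, (if s i then (1 : ℝ) else -1) * a i t) := by ring
end
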